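/- Let q be a prime power and n a positive integer with gcd(q, n) = 1, and let r divide q-1. If the multiplicative order of q modulo n is ℓ, then the multiplicative order of q modulo rn equals (r / gcd((q^ℓ - 1)/n, r)) · ℓ. -/

import Mathlib

theorem stmt_5 (q r n ℓ : ℕ) (hq : IsPrimePow q) (hn : 0 < n) (hr : 0 < r)
    (hco : Nat.Coprime q n) (hrq : r ∣ q - 1)
    (hℓ : ℓ = orderOf (q : ZMod n)) :
    orderOf (q : ZMod (r * n)) = (r / Nat.gcd ((q ^ ℓ - 1) / n) r) * ℓ := by
  have hq2 : 2 ≤ q := hq.two_le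
  have hq1 : 1 ≤ q := le_trans one_le_two hq2
  haveI : NeZero n := ⟨hn.ne'⟩
  have key : ∀ (N k : ℕ), ((q : ZMod N)) ^ k = 1 ↔ N ∣ q ^ k - 1 := by
    intro N k
    have h1 : 1 ≤ q ^ k := Nat.one_le_pow _ _ hq1
    rw [← Nat.cast_pow, ← Nat.cast_one, ZMod.natCast_eq_natCast_iff]
    exact ⟨fun h => (Nat.modEq_iff_dvd' h1).mp h.symm,
           fun h => ((Nat.modEq_iff_dvd' h1).mpr h).symm⟩
  have hndvd_iff : ∀ k, n ∣ q ^ k - 1 ↔ ℓ ∣ k := by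
    intro k
    rw [← key n k, hℓ, orderOf_dvd_iff_pow_eq_one]
  have hℓpos : 0 < ℓ := by
    rw [hℓ, ← ZMod.coe_unitOfCoprime q hco, orderOf_units]
    exact orderOf_pos _
  have hnq : n ∣ q ^ ℓ - 1 := (hndvd_iff ℓ).mpr dvd_rfl
  set m : ℕ := (q ^ ℓ - 1) / n with hm
  have hnm : n * m = q ^ ℓ - 1 := Nat.mul_div_cancel' hnq
  set g : ℕ := Nat.gcd m r with hg
  have hgpos : 0 < g := Nat.gcd_pos_of_pos_right m hr
  set r' : ℕ := r / g with hr'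
  have hrZ : (r : ℤ) ∣ (q : ℤ) - 1 := by
    have h := Int.natCast_dvd_natCast.mpr hrq
    rwa [Nat.cast_sub hq1, Nat.cast_one] at h
  have hlast : ∀ t : ℕ, r ∣ m * t ↔ r' ∣ t := by
    intro t
    have hmg : g ∣ m := Nat.gcd_dvd_left m r
    have hrg : g ∣ r := Nat.gcd_dvd_right m r
    obtain ⟨m', hm'⟩ := hmg
    obtain ⟨rr, hrr⟩ := hrg
    have hrr' : r' = rr := by rw [hr', hrr, Nat.mul_div_cancel_left _ hgpos]
    have hcop : Nat.Coprime rr m' := by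
      have := Nat.coprime_div_gcd_div_gcd (m := m) (n := r) hgpos
      rw [← hg, hm', hrr, Nat.mul_div_cancel_left _ hgpos,
        Nat.mul_div_cancel_left _ hgpos] at this
      exact this.symm
    rw [hrr', hrr, hm']
    constructor
    · intro h
      have h2 : rr ∣ m' * t := by
        rw [mul_assoc] at h
        exact (Nat.mul_dvd_mul_iff_left hgpos).mp h
      exact hcop.dvd_of_dvd_mul_left h2
    · intro h
      have : g * rr ∣ g * (m' * t) :=
        Nat.mul_dvd_mul_left g ((Dvd.dvd.mul_left h m'))
      rwa [← mul_assoc] at this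
  have core : ∀ t : ℕ, r * n ∣ q ^ (ℓ * t) - 1 ↔ r' ∣ t := by
    intro t
    set Q : ℤ := (q : ℤ) ^ ℓ with hQ
    have hQ1 : ∀ i : ℕ, (r : ℤ) ∣ Q ^ i - 1 := by
      intro i
      refine hrZ.trans (dvd_trans ?_ (by simpa using sub_dvd_pow_sub_pow Q 1 i))
      simpa using sub_dvd_pow_sub_pow (q : ℤ) 1 ℓ
    set S : ℤ := ∑ i ∈ Finset.range t, Q ^ i with hS
    have hSt : (r : ℤ) ∣ S - t := by
      have h1 : S - t = ∑ i ∈ Finset.range t, (Q ^ i - 1) := by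
        rw [Finset.sum_sub_distrib]; simp [hS]
      rw [h1]
      exact Finset.dvd_sum fun i _ => hQ1 i
    have hcast : (r * n ∣ q ^ (ℓ * t) - 1) ↔ ((r * n : ℤ) ∣ Q ^ t - 1) := by
      rw [← Int.natCast_dvd_natCast]
      have h1 : 1 ≤ q ^ (ℓ * t) := Nat.one_le_pow _ _ hq1
      rw [Nat.cast_sub h1]
      push_cast
      rw [hQ, ← pow_mul]
    have hfact : Q ^ t - 1 = (n : ℤ) * ((m : ℤ) * S) := by
      have hgeom : S * (Q - 1) = Q ^ t - 1 := geom_sum_mul Q t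
      have hQm : Q - 1 = (n : ℤ) * (m : ℤ) := by
        have h1 : 1 ≤ q ^ ℓ := Nat.one_le_pow _ _ hq1
        have := congrArg (fun x : ℕ => (x : ℤ)) hnm
        simp only [Nat.cast_mul, Nat.cast_sub h1, Nat.cast_pow, Nat.cast_one] at this
        rw [hQ, ← this]
      rw [← hgeom, hQm]; ring
    rw [hcast, hfact]
    have hn0 : (n : ℤ) ≠ 0 := by exact_mod_cast hn.ne'
    rw [show ((r : ℤ) * n) = (n : ℤ) * r by ring, mul_dvd_mul_iff_left hn0]
    have hmS : ((r : ℤ) ∣ (m : ℤ) * S) ↔ ((r : ℤ) ∣ (m : ℤ) * t) := by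
      have hd : (r : ℤ) ∣ (m : ℤ) * S - (m : ℤ) * t := by
        rw [← mul_sub]
        exact Dvd.dvd.mul_left hSt (m : ℤ)
      constructor
      · intro h; have := dvd_sub h hd; simpa using this
      · intro h; have := dvd_add h hd; simpa using this
    rw [hmS]
    rw [show ((m : ℤ) * t) = ((m * t : ℕ) : ℤ) by push_cast; ring,
      Int.natCast_dvd_natCast]
    exact hlast t
  apply Nat.dvd_antisymm
  · apply orderOf_dvd_of_pow_eq_one
    rw [key (r * n) (r' * ℓ)]
    rw [mul_comm r' ℓ]
    exact (core r').mpr dvd_rfl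
  · have hpow : ((q : ZMod (r * n))) ^ orderOf ((q : ZMod (r * n))) = 1 :=
      pow_orderOf_eq_one _
    have hD : r * n ∣ q ^ orderOf ((q : ZMod (r * n))) - 1 := (key _ _).mp hpow
    have hnD : n ∣ q ^ orderOf ((q : ZMod (r * n))) - 1 :=
      dvd_trans (dvd_mul_left n r) hD
    obtain ⟨t, ht⟩ := (hndvd_iff _).mp hnD
    rw [ht] at hD ⊢
    have : r' ∣ t := (core t).mp hD
    rw [mul_comm r' ℓ]
    exact Nat.mul_dvd_mul_left ℓ this
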